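/- Let M be a measurement assemblage in dimension d with m settings and o outcomes, p a weighting, and ρ a density matrix on Fin d × Fin d. Define σ x a = Tr₁[(M x a ⊗ₖ 1) ρ]. Then σ is a state assemblage and its steerability is bounded by the incompatibility of M: S(σ,p) ≤ I⋄(M,p). -/

import Mathlib

open Matrix Kronecker BigOperators ComplexOrder

noncomputable section

def IsDensityMatrix {n : Type*} [Fintype n] [DecidableEq n] (ρ : Matrix n n ℂ) : Prop :=
  ρ.PosSemidef ∧ ρ.trace = 1

noncomputable def traceNorm {n : Type*} [Fintype n] [DecidableEq n] (X : Matrix n n ℂ) : ℝ :=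
  (((Matrix.posSemidef_conjTranspose_mul_self X).1.eigenvectorUnitary : Matrix n n ℂ) *
      diagonal (((↑) : ℝ → ℂ) ∘ Real.sqrt ∘ (Matrix.posSemidef_conjTranspose_mul_self X).1.eigenvalues) *
      (star (Matrix.posSemidef_conjTranspose_mul_self X).1.eigenvectorUnitary : Matrix n n ℂ)).trace.re

noncomputable def specNorm {n : Type*} [Fintype n] [DecidableEq n] (X : Matrix n n ℂ) : ℝ :=
  ‖Matrix.toEuclideanCLM (𝕜 := ℂ) X‖

def ptrace1 {n e : Type*} [Fintype n] (ρ : Matrix (n × e) (n × e) ℂ) : Matrix e e ℂ :=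
  Matrix.of fun j j' => ∑ i, ρ (i, j) (i, j')

def IsAssemblage {d m o : ℕ} (M : Fin m → Fin o → Matrix (Fin d) (Fin d) ℂ) : Prop :=
  (∀ x a, (M x a).PosSemidef) ∧ ∀ x, ∑ a, M x a = 1

def IsWeighting {m : ℕ} (p : Fin m → ℝ) : Prop :=
  (∀ x, 0 < p x) ∧ ∑ x, p x = 1

noncomputable def Ddiamond {d m o : ℕ} (p : Fin m → ℝ)
    (M N : Fin m → Fin o → Matrix (Fin d) (Fin d) ℂ) : ℝ :=
  (1 / 2) * ∑ x, p x *
    ⨆ ρ : {ρ : Matrix (Fin d × Fin d) (Fin d × Fin d) ℂ // IsDensityMatrix ρ},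
      ∑ a, traceNorm (ptrace1 (((M x a - N x a) ⊗ₖ (1 : Matrix (Fin d) (Fin d) ℂ)) * ρ.1))

def JointlyMeasurable {d m o : ℕ} (F : Fin m → Fin o → Matrix (Fin d) (Fin d) ℂ) : Prop :=
  ∃ G : (Fin m → Fin o) → Matrix (Fin d) (Fin d) ℂ,
    (∀ lam, (G lam).PosSemidef) ∧ (∑ lam, G lam = 1) ∧
    ∀ x a, F x a = ∑ lam ∈ Finset.univ.filter (fun lam => lam x = a), G lam

noncomputable def Incomp {d m o : ℕ} (p : Fin m → ℝ)
    (M : Fin m → Fin o → Matrix (Fin d) (Fin d) ℂ) : ℝ :=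
  ⨅ F : {F : Fin m → Fin o → Matrix (Fin d) (Fin d) ℂ // IsAssemblage F ∧ JointlyMeasurable F},
    Ddiamond p M F.1


def IsStateAssemblage {d m o : ℕ} (σ : Fin m → Fin o → Matrix (Fin d) (Fin d) ℂ) : Prop :=
  (∀ x a, (σ x a).PosSemidef) ∧ ∀ x, ∑ a, (σ x a).trace = 1

def HasLHSModel {d m o : ℕ} (σ : Fin m → Fin o → Matrix (Fin d) (Fin d) ℂ) : Prop :=
  ∃ σ' : (Fin m → Fin o) → Matrix (Fin d) (Fin d) ℂ,
    (∀ lam, (σ' lam).PosSemidef) ∧ (∑ lam, (σ' lam).trace = 1) ∧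
    ∀ x a, σ x a = ∑ lam ∈ Finset.univ.filter (fun lam => lam x = a), σ' lam

noncomputable def Steerability {d m o : ℕ} (p : Fin m → ℝ)
    (σ : Fin m → Fin o → Matrix (Fin d) (Fin d) ℂ) : ℝ :=
  ⨅ τ : {τ : Fin m → Fin o → Matrix (Fin d) (Fin d) ℂ // IsStateAssemblage τ ∧ HasLHSModel τ},
    (1 / 2) * ∑ x, p x * ∑ a, traceNorm (σ x a - τ.1 x a)

/-! ### Auxiliary lemmas -/

section Aux

set_option linter.unusedSectionVars false

open scoped MatrixOrder

lemma conj_mul_self_re (z : ℂ) : (star z * z).re = ‖z‖ ^ 2 := by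
  rw [Complex.star_def, Complex.conj_mul']
  simp [Complex.sq_norm, ← Complex.ofReal_pow]

variable {n e : Type*} [Fintype n] [Fintype e] [DecidableEq n] [DecidableEq e]

lemma psd_sqrt_spec {A : Matrix e e ℂ} (hA : A.PosSemidef) :
    ((hA.1.eigenvectorUnitary : Matrix e e ℂ) *
      diagonal (((↑) : ℝ → ℂ) ∘ Real.sqrt ∘ hA.1.eigenvalues) *
      (star hA.1.eigenvectorUnitary : Matrix e e ℂ)).PosSemidef ∧
    ((hA.1.eigenvectorUnitary : Matrix e e ℂ) *
      diagonal (((↑) : ℝ → ℂ) ∘ Real.sqrt ∘ hA.1.eigenvalues) *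
      (star hA.1.eigenvectorUnitary : Matrix e e ℂ)) *
    ((hA.1.eigenvectorUnitary : Matrix e e ℂ) *
      diagonal (((↑) : ℝ → ℂ) ∘ Real.sqrt ∘ hA.1.eigenvalues) *
      (star hA.1.eigenvectorUnitary : Matrix e e ℂ)) = A := by
  have h : ((hA.1.eigenvectorUnitary : Matrix e e ℂ) *
      diagonal (((↑) : ℝ → ℂ) ∘ Real.sqrt ∘ hA.1.eigenvalues) *
      (star hA.1.eigenvectorUnitary : Matrix e e ℂ)) = CFC.sqrt A := by
    rw [CFC.sqrt_eq_real_sqrt A hA.nonneg, cfcₙ_eq_cfc, hA.1.cfc_eq]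
    rfl
  rw [h]
  exact ⟨Matrix.nonneg_iff_posSemidef.mp (CFC.sqrt_nonneg A), CFC.sqrt_mul_sqrt_self A hA.nonneg⟩

lemma psd_decomp {A : Matrix e e ℂ} (hA : A.PosSemidef) : ∃ B : Matrix e e ℂ, A = Bᴴ * B := by
  obtain ⟨h1, h2⟩ := psd_sqrt_spec hA
  exact ⟨_, by rw [h1.1.eq, h2]⟩

lemma diag_nonneg' {M : Matrix e e ℂ} (hM : M.PosSemidef) (j : e) : 0 ≤ M j j := by
  have := hM.dotProduct_mulVec_nonneg (Pi.single j 1)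
  simpa [dotProduct, mulVec, Pi.single_apply, Finset.sum_ite_eq', mul_comm] using this

lemma diag_re_nonneg' {M : Matrix e e ℂ} (hM : M.PosSemidef) (j : e) : 0 ≤ (M j j).re :=
  (Complex.le_def.mp (diag_nonneg' hM j)).1

lemma trace_nonneg' {M : Matrix e e ℂ} (hM : M.PosSemidef) : 0 ≤ M.trace :=
  Finset.sum_nonneg fun j _ => diag_nonneg' hM j

lemma traceNorm_nonneg' (X : Matrix e e ℂ) : 0 ≤ traceNorm X :=
  (Complex.le_def.mp (trace_nonneg'
    (psd_sqrt_spec (Matrix.posSemidef_conjTranspose_mul_self X)).1)).1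

lemma trace_ptrace1 (X : Matrix (n × e) (n × e) ℂ) : (ptrace1 X).trace = X.trace := by
  rw [trace, trace]
  simp only [ptrace1, diag, of_apply, Fintype.sum_prod_type]
  exact Finset.sum_comm

lemma ptrace1_sub (X Y : Matrix (n × e) (n × e) ℂ) :
    ptrace1 (X - Y) = ptrace1 X - ptrace1 Y := by
  ext j j'
  simp [ptrace1, Finset.sum_sub_distrib]

lemma ptrace1_sum {ι : Type*} (s : Finset ι) (X : ι → Matrix (n × e) (n × e) ℂ) :
    ptrace1 (∑ i ∈ s, X i) = ∑ i ∈ s, ptrace1 (X i) := by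
  ext j j'
  simp only [ptrace1, of_apply, Matrix.sum_apply]
  exact Finset.sum_comm

lemma kron_conjTranspose (A : Matrix n n ℂ) (B : Matrix e e ℂ) :
    (A ⊗ₖ B)ᴴ = Aᴴ ⊗ₖ Bᴴ := by
  ext ⟨i, j⟩ ⟨k, l⟩
  simp [conjTranspose_apply, kroneckerMap_apply, mul_comm]

lemma sum_kron {ι : Type*} (s : Finset ι) (A : ι → Matrix n n ℂ) (B : Matrix e e ℂ) :
    (∑ i ∈ s, A i) ⊗ₖ B = ∑ i ∈ s, (A i) ⊗ₖ B := by
  ext ⟨i, j⟩ ⟨k, l⟩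
  simp [kroneckerMap_apply, Matrix.sum_apply, Finset.sum_mul]

lemma sub_kron (A B : Matrix n n ℂ) (Cm : Matrix e e ℂ) :
    (A - B) ⊗ₖ Cm = A ⊗ₖ Cm - B ⊗ₖ Cm := by
  ext ⟨i, j⟩ ⟨k, l⟩
  simp [kroneckerMap_apply, sub_mul]

lemma kron_posSemidef {A : Matrix n n ℂ} {B : Matrix e e ℂ}
    (hA : A.PosSemidef) (hB : B.PosSemidef) : (A ⊗ₖ B).PosSemidef := by
  obtain ⟨C, hC⟩ := psd_decomp hA
  obtain ⟨D, hD⟩ := psd_decomp hB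
  rw [hC, hD, mul_kronecker_mul, ← kron_conjTranspose]
  exact posSemidef_conjTranspose_mul_self _

lemma trace_mul_nonneg' {P ρ : Matrix n n ℂ} (hP : P.PosSemidef) (hρ : ρ.PosSemidef) :
    0 ≤ (P * ρ).trace := by
  obtain ⟨C, hC⟩ := psd_decomp hP
  rw [hC, mul_assoc, trace_mul_comm]
  exact trace_nonneg' (hρ.mul_mul_conjTranspose_same C)

lemma ptrace1_kron_entry (A : Matrix n n ℂ) (ρ : Matrix (n × e) (n × e) ℂ) (j j' : e) :
    ptrace1 ((A ⊗ₖ (1 : Matrix e e ℂ)) * ρ) j j' = ∑ i, ∑ k, A i k * ρ (k, j) (i, j') := by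
  simp only [ptrace1, of_apply, mul_apply, kroneckerMap_apply, Fintype.sum_prod_type,
    one_apply, mul_ite, mul_one, mul_zero, ite_mul, zero_mul]
  simp [Finset.sum_ite_eq', mul_comm]

lemma isHermitian_ptrace1 {A : Matrix n n ℂ} {ρ : Matrix (n × e) (n × e) ℂ}
    (hA : A.IsHermitian) (hρ : ρ.IsHermitian) :
    (ptrace1 ((A ⊗ₖ (1 : Matrix e e ℂ)) * ρ)).IsHermitian := by
  ext j j'
  rw [conjTranspose_apply, ptrace1_kron_entry, ptrace1_kron_entry]
  simp only [star_sum, star_mul']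
  rw [Finset.sum_comm]
  refine Finset.sum_congr rfl fun i _ => Finset.sum_congr rfl fun k _ => ?_
  rw [hρ.apply, hA.apply, mul_comm]

lemma sum_reorder (g : n → e → n → e → ℂ) :
    ∑ i, ∑ j, ∑ k, ∑ l, g i j k l = ∑ l, ∑ j, ∑ i, ∑ k, g i j k l :=
  calc ∑ i, ∑ j, ∑ k, ∑ l, g i j k l
      = ∑ i, ∑ j, ∑ l, ∑ k, g i j k l :=
        Finset.sum_congr rfl fun i _ => Finset.sum_congr rfl fun j _ => Finset.sum_comm
    _ = ∑ i, ∑ l, ∑ j, ∑ k, g i j k l :=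
        Finset.sum_congr rfl fun i _ => Finset.sum_comm
    _ = ∑ l, ∑ i, ∑ j, ∑ k, g i j k l := Finset.sum_comm
    _ = ∑ l, ∑ j, ∑ i, ∑ k, g i j k l :=
        Finset.sum_congr rfl fun l _ => Finset.sum_comm

lemma key_trace (A : Matrix n n ℂ) (ρ : Matrix (n × e) (n × e) ℂ) (v : e → ℂ) :
    dotProduct (star v) ((ptrace1 ((A ⊗ₖ (1 : Matrix e e ℂ)) * ρ)) *ᵥ v)
      = ((A ⊗ₖ (vecMulVec v (star v))) * ρ).trace := by
  simp only [dotProduct, mulVec, ptrace1_kron_entry, trace, diag, mul_apply,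
    kroneckerMap_apply, vecMulVec_apply, Pi.star_apply, Fintype.sum_prod_type]
  rw [sum_reorder]
  simp only [Finset.mul_sum, Finset.sum_mul]
  refine Finset.sum_congr rfl fun j _ => Finset.sum_congr rfl fun j' _ =>
    Finset.sum_congr rfl fun i _ => Finset.sum_congr rfl fun k _ => ?_
  ring

lemma posSemidef_vecMulVec (v : e → ℂ) : (vecMulVec v (star v)).PosSemidef := by
  refine posSemidef_iff_dotProduct_mulVec.mpr ⟨?_, ?_⟩
  · ext i j
    simp [conjTranspose_apply, vecMulVec_apply, mul_comm]
  · intro x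
    have : dotProduct (star x) ((vecMulVec v (star v)) *ᵥ x)
        = star (dotProduct (star v) x) * (dotProduct (star v) x) := by
      simp only [dotProduct, mulVec, vecMulVec_apply, Pi.star_apply, star_sum, star_mul',
        Finset.mul_sum, Finset.sum_mul]
      rw [Finset.sum_comm]
      refine Finset.sum_congr rfl fun i _ => ?_
      refine Finset.sum_congr rfl fun j _ => ?_
      simp [mul_comm, mul_left_comm]
    rw [this]
    exact star_mul_self_nonneg _

lemma posSemidef_ptrace1 {A : Matrix n n ℂ} {ρ : Matrix (n × e) (n × e) ℂ}
    (hA : A.PosSemidef) (hρ : ρ.PosSemidef) :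
    (ptrace1 ((A ⊗ₖ (1 : Matrix e e ℂ)) * ρ)).PosSemidef := by
  refine posSemidef_iff_dotProduct_mulVec.mpr ⟨isHermitian_ptrace1 hA.1 hρ.1, fun v => ?_⟩
  rw [key_trace]
  exact trace_mul_nonneg' (kron_posSemidef hA (posSemidef_vecMulVec v)) hρ

lemma traceNorm_le_of_entry_bound (X : Matrix e e ℂ) (C : ℝ)
    (hC : ∀ i j, ‖X i j‖ ≤ C) :
    traceNorm X ≤ (Fintype.card e) * Real.sqrt (Fintype.card e * C ^ 2) := by
  set h := Matrix.posSemidef_conjTranspose_mul_self X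
  set S := (h.1.eigenvectorUnitary : Matrix e e ℂ) *
      diagonal (((↑) : ℝ → ℂ) ∘ Real.sqrt ∘ h.1.eigenvalues) *
      (star h.1.eigenvectorUnitary : Matrix e e ℂ) with hSdef
  have hSpsd : S.PosSemidef := (psd_sqrt_spec h).1
  have hmul : S * S = Xᴴ * X := (psd_sqrt_spec h).2
  have diagb : ∀ j, (S j j).re ≤ Real.sqrt (Fintype.card e * C ^ 2) := by
    intro j
    have h1 : 0 ≤ (S j j).re := diag_re_nonneg' hSpsd j
    have h2 : ((S * S) j j).re = ∑ i, ‖S i j‖ ^ 2 := by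
      rw [Matrix.mul_apply, Complex.re_sum]
      refine Finset.sum_congr rfl fun i _ => ?_
      rw [← hSpsd.1.apply j i]
      exact conj_mul_self_re _
    have h3 : (S j j).re ^ 2 ≤ ((S * S) j j).re := by
      rw [h2]
      calc (S j j).re ^ 2 ≤ ‖S j j‖ ^ 2 := by
            exact sq_le_sq' (by linarith [neg_abs_le (S j j).re, Complex.abs_re_le_norm (S j j)])
              (le_trans (le_abs_self _) (Complex.abs_re_le_norm _))
        _ ≤ ∑ i, ‖S i j‖ ^ 2 :=
            Finset.single_le_sum (f := fun i => ‖S i j‖ ^ 2)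
              (fun i _ => sq_nonneg _) (Finset.mem_univ j)
    have h4 : ((Xᴴ * X) j j).re ≤ Fintype.card e * C ^ 2 := by
      rw [Matrix.mul_apply, Complex.re_sum]
      calc ∑ i, ((Xᴴ) j i * X i j).re = ∑ i, ‖X i j‖ ^ 2 := by
            refine Finset.sum_congr rfl fun i _ => ?_
            rw [Matrix.conjTranspose_apply]
            exact conj_mul_self_re _
        _ ≤ ∑ _i : e, C ^ 2 := Finset.sum_le_sum fun i _ => by
            have := hC i j
            nlinarith [norm_nonneg (X i j)]
        _ = Fintype.card e * C ^ 2 := by simp [Finset.card_univ]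
    calc (S j j).re = Real.sqrt ((S j j).re ^ 2) := (Real.sqrt_sq h1).symm
      _ ≤ Real.sqrt (Fintype.card e * C ^ 2) :=
          Real.sqrt_le_sqrt (h3.trans (by rw [hmul] at h2 ⊢; exact h4))
  calc traceNorm X = ∑ j, (S j j).re := by
        rw [traceNorm, Matrix.trace, Complex.re_sum]; rfl
    _ ≤ ∑ _j : e, Real.sqrt (Fintype.card e * C ^ 2) :=
        Finset.sum_le_sum fun j _ => diagb j
    _ = Fintype.card e * Real.sqrt (Fintype.card e * C ^ 2) := by simp [Finset.card_univ]

lemma density_entry_le_one {ρ : Matrix e e ℂ} (hρ : ρ.PosSemidef) (h1 : ρ.trace = 1)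
    (u v : e) : ‖ρ u v‖ ≤ 1 := by
  obtain ⟨B, hB⟩ := psd_decomp hρ
  have hdiag : ∀ w, (ρ w w).re = ∑ l, ‖B l w‖ ^ 2 := by
    intro w
    rw [hB, Matrix.mul_apply, Complex.re_sum]
    refine Finset.sum_congr rfl fun l _ => ?_
    rw [Matrix.conjTranspose_apply]
    exact conj_mul_self_re _
  have htr : ∑ w, (ρ w w).re = 1 := by
    have : (ρ.trace).re = 1 := by rw [h1]; simp
    rw [← this, Matrix.trace, Complex.re_sum]; rfl
  have hdle : ∀ w, (ρ w w).re ≤ 1 := by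
    intro w
    rw [← htr]
    exact Finset.single_le_sum (fun i _ => diag_re_nonneg' hρ i) (Finset.mem_univ w)
  set f : EuclideanSpace ℂ e := WithLp.toLp 2 (fun l => B l u) with hf
  set g : EuclideanSpace ℂ e := WithLp.toLp 2 (fun l => B l v) with hg
  have hfg : ρ u v = inner ℂ f g := by
    rw [hB, Matrix.mul_apply, PiLp.inner_apply]
    refine Finset.sum_congr rfl fun l _ => ?_
    rw [Matrix.conjTranspose_apply, RCLike.inner_apply, starRingEnd_apply]
    exact mul_comm _ _
  have hnf : ‖f‖ ≤ 1 := by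
    rw [EuclideanSpace.norm_eq]
    refine Real.sqrt_le_one.mpr ?_
    calc ∑ l, ‖f l‖ ^ 2 = (ρ u u).re := (hdiag u).symm
      _ ≤ 1 := hdle u
  have hng : ‖g‖ ≤ 1 := by
    rw [EuclideanSpace.norm_eq]
    refine Real.sqrt_le_one.mpr ?_
    calc ∑ l, ‖g l‖ ^ 2 = (ρ v v).re := (hdiag v).symm
      _ ≤ 1 := hdle v
  calc ‖ρ u v‖ = ‖(inner ℂ f g : ℂ)‖ := by rw [hfg]
    _ ≤ ‖f‖ * ‖g‖ := norm_inner_le_norm f g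
    _ ≤ 1 := by nlinarith [norm_nonneg f, norm_nonneg g]

lemma ptrace1_entry_bound {X : Matrix n n ℂ} {ρ' : Matrix (n × e) (n × e) ℂ}
    (hρ' : ρ'.PosSemidef) (h1 : ρ'.trace = 1) (j j' : e) :
    ‖ptrace1 ((X ⊗ₖ (1 : Matrix e e ℂ)) * ρ') j j'‖ ≤ ∑ i, ∑ k, ‖X i k‖ := by
  rw [ptrace1_kron_entry]
  calc ‖∑ i, ∑ k, X i k * ρ' (k, j) (i, j')‖
      ≤ ∑ i, ‖∑ k, X i k * ρ' (k, j) (i, j')‖ := norm_sum_le _ _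
    _ ≤ ∑ i, ∑ k, ‖X i k * ρ' (k, j) (i, j')‖ :=
        Finset.sum_le_sum fun i _ => norm_sum_le _ _
    _ ≤ ∑ i, ∑ k, ‖X i k‖ := by
        refine Finset.sum_le_sum fun i _ => Finset.sum_le_sum fun k _ => ?_
        rw [norm_mul]
        calc ‖X i k‖ * ‖ρ' (k, j) (i, j')‖ ≤ ‖X i k‖ * 1 :=
              mul_le_mul_of_nonneg_left (density_entry_le_one hρ' h1 _ _) (norm_nonneg _)
          _ = ‖X i k‖ := mul_one _

end Aux

/-- The steerability of the state assemblage obtained by performing the measurements of `M`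
on one half of a bipartite state `ρ` is bounded by the incompatibility of `M`. -/
theorem steerability_le_incompatibility {d m o : ℕ}
    (M : Fin m → Fin o → Matrix (Fin d) (Fin d) ℂ) (hM : IsAssemblage M)
    (p : Fin m → ℝ) (hp : IsWeighting p)
    (ρ : Matrix (Fin d × Fin d) (Fin d × Fin d) ℂ) (hρ : IsDensityMatrix ρ) :
    IsStateAssemblage (fun x a => ptrace1 (((M x a) ⊗ₖ (1 : Matrix (Fin d) (Fin d) ℂ)) * ρ)) ∧
    Steerability p (fun x a => ptrace1 (((M x a) ⊗ₖ (1 : Matrix (Fin d) (Fin d) ℂ)) * ρ))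
      ≤ Incomp p M := by
  -- generic trace computation
  have trace_sum_one : ∀ (A : Fin o → Matrix (Fin d) (Fin d) ℂ), (∑ a, A a) = 1 →
      ∑ a, (ptrace1 ((A a ⊗ₖ (1 : Matrix (Fin d) (Fin d) ℂ)) * ρ)).trace = 1 := by
    intro A hA
    calc ∑ a, (ptrace1 ((A a ⊗ₖ (1 : Matrix (Fin d) (Fin d) ℂ)) * ρ)).trace
        = ∑ a, ((A a ⊗ₖ (1 : Matrix (Fin d) (Fin d) ℂ)) * ρ).trace := by
          exact Finset.sum_congr rfl fun a _ => trace_ptrace1 _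
      _ = (((∑ a, A a) ⊗ₖ (1 : Matrix (Fin d) (Fin d) ℂ)) * ρ).trace := by
          rw [sum_kron, Finset.sum_mul, trace_sum]
      _ = 1 := by rw [hA, Matrix.one_kronecker_one, one_mul, hρ.2]
  have hstate : ∀ (A : Fin m → Fin o → Matrix (Fin d) (Fin d) ℂ), IsAssemblage A →
      IsStateAssemblage (fun x a => ptrace1 ((A x a ⊗ₖ (1 : Matrix (Fin d) (Fin d) ℂ)) * ρ)) :=
    fun A hA => ⟨fun x a => posSemidef_ptrace1 (hA.1 x a) hρ.1,
      fun x => trace_sum_one _ (hA.2 x)⟩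
  refine ⟨hstate M hM, ?_⟩
  -- dimensions are positive
  have hd : 0 < d := by
    rcases Nat.eq_zero_or_pos d with h | h
    · subst h
      have := hρ.2
      simp [Matrix.trace] at this
    · exact h
  have hm : 0 < m := by
    rcases Nat.eq_zero_or_pos m with h | h
    · subst h
      have := hp.2
      simp at this
    · exact h
  have ho : 0 < o := by
    rcases Nat.eq_zero_or_pos o with h | h
    · subst h
      have h1 := hM.2 ⟨0, hm⟩
      simp only [Finset.univ_eq_empty, Finset.sum_empty] at h1
      have := congrFun (congrFun h1 ⟨0, hd⟩) ⟨0, hd⟩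
      simp [Matrix.one_apply] at this
    · exact h
  -- the joint-measurability index type is nonempty
  haveI hne : Nonempty {F : Fin m → Fin o → Matrix (Fin d) (Fin d) ℂ //
      IsAssemblage F ∧ JointlyMeasurable F} := by
    set a₀ : Fin o := ⟨0, ho⟩
    refine ⟨⟨fun _ a => if a = a₀ then 1 else 0, ⟨?_, ?_⟩, ?_⟩⟩
    · intro x a
      by_cases h : a = a₀ <;> simp [h, Matrix.PosSemidef.one, Matrix.PosSemidef.zero]
    · intro x
      simp [Finset.sum_ite_eq']
    · refine ⟨fun lam => if lam = (fun _ => a₀) then 1 else 0, ?_, ?_, ?_⟩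
      · intro lam
        by_cases h : lam = (fun _ => a₀) <;>
          simp [h, Matrix.PosSemidef.one, Matrix.PosSemidef.zero]
      · simp [Finset.sum_ite_eq']
      · intro x a
        rw [Finset.sum_ite_eq' (Finset.univ.filter (fun lam => lam x = a)) (fun _ => a₀)
          (fun _ => (1 : Matrix (Fin d) (Fin d) ℂ))]
        by_cases h : a = a₀ <;> simp [h, eq_comm]
  refine le_ciInf fun F => ?_
  obtain ⟨hFass, G, hGpsd, hGsum, hFG⟩ := F.2
  set τ : Fin m → Fin o → Matrix (Fin d) (Fin d) ℂ :=
    fun x a => ptrace1 ((F.1 x a ⊗ₖ (1 : Matrix (Fin d) (Fin d) ℂ)) * ρ) with hτdef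
  have hτstate : IsStateAssemblage τ := hstate F.1 hFass
  have hτLHS : HasLHSModel τ := by
    refine ⟨fun lam => ptrace1 ((G lam ⊗ₖ (1 : Matrix (Fin d) (Fin d) ℂ)) * ρ),
      fun lam => posSemidef_ptrace1 (hGpsd lam) hρ.1, ?_, ?_⟩
    · calc ∑ lam, (ptrace1 ((G lam ⊗ₖ (1 : Matrix (Fin d) (Fin d) ℂ)) * ρ)).trace
          = ∑ lam, ((G lam ⊗ₖ (1 : Matrix (Fin d) (Fin d) ℂ)) * ρ).trace :=
            Finset.sum_congr rfl fun lam _ => trace_ptrace1 _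
        _ = (((∑ lam, G lam) ⊗ₖ (1 : Matrix (Fin d) (Fin d) ℂ)) * ρ).trace := by
            rw [sum_kron, Finset.sum_mul, trace_sum]
        _ = 1 := by rw [hGsum, Matrix.one_kronecker_one, one_mul, hρ.2]
    · intro x a
      rw [hτdef]
      simp only
      rw [hFG x a, sum_kron, Finset.sum_mul, ptrace1_sum]
  -- difference identity
  have hdiff : ∀ x a,
      ptrace1 ((M x a ⊗ₖ (1 : Matrix (Fin d) (Fin d) ℂ)) * ρ) - τ x a
        = ptrace1 (((M x a - F.1 x a) ⊗ₖ (1 : Matrix (Fin d) (Fin d) ℂ)) * ρ) := by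
    intro x a
    rw [hτdef]
    simp only
    rw [sub_kron, sub_mul, ptrace1_sub]
  -- Steerability is at most the distance to τ
  have hbb : BddBelow (Set.range fun τ' : {τ' : Fin m → Fin o → Matrix (Fin d) (Fin d) ℂ //
      IsStateAssemblage τ' ∧ HasLHSModel τ'} =>
      (1 / 2) * ∑ x, p x * ∑ a, traceNorm
        (ptrace1 ((M x a ⊗ₖ (1 : Matrix (Fin d) (Fin d) ℂ)) * ρ) - τ'.1 x a)) := by
    refine ⟨0, ?_⟩
    rintro r ⟨τ', rfl⟩
    have : (0 : ℝ) ≤ ∑ x, p x * ∑ a, traceNorm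
        (ptrace1 ((M x a ⊗ₖ (1 : Matrix (Fin d) (Fin d) ℂ)) * ρ) - τ'.1 x a) :=
      Finset.sum_nonneg fun x _ => mul_nonneg (hp.1 x).le
        (Finset.sum_nonneg fun a _ => traceNorm_nonneg' _)
    linarith
  have step1 : Steerability p
      (fun x a => ptrace1 ((M x a ⊗ₖ (1 : Matrix (Fin d) (Fin d) ℂ)) * ρ))
      ≤ (1 / 2) * ∑ x, p x * ∑ a, traceNorm
        (ptrace1 ((M x a ⊗ₖ (1 : Matrix (Fin d) (Fin d) ℂ)) * ρ) - τ x a) :=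
    ciInf_le hbb ⟨τ, hτstate, hτLHS⟩
  refine step1.trans ?_
  -- compare with the diamond distance
  rw [Ddiamond]
  refine mul_le_mul_of_nonneg_left ?_ (by norm_num)
  refine Finset.sum_le_sum fun x _ => ?_
  refine mul_le_mul_of_nonneg_left ?_ (hp.1 x).le
  -- the sup is bounded above
  have hba : BddAbove (Set.range fun ρ' : {ρ' : Matrix (Fin d × Fin d) (Fin d × Fin d) ℂ //
      IsDensityMatrix ρ'} =>
      ∑ a, traceNorm (ptrace1 (((M x a - F.1 x a) ⊗ₖ (1 : Matrix (Fin d) (Fin d) ℂ)) * ρ'.1))) := by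
    refine ⟨∑ a, (Fintype.card (Fin d)) * Real.sqrt ((Fintype.card (Fin d)) *
      (∑ i, ∑ k, ‖(M x a - F.1 x a) i k‖) ^ 2), ?_⟩
    rintro r ⟨ρ', rfl⟩
    refine Finset.sum_le_sum fun a _ => ?_
    exact traceNorm_le_of_entry_bound _ _
      (fun j j' => ptrace1_entry_bound ρ'.2.1 ρ'.2.2 j j')
  calc ∑ a, traceNorm (ptrace1 ((M x a ⊗ₖ (1 : Matrix (Fin d) (Fin d) ℂ)) * ρ) - τ x a)
      = ∑ a, traceNorm (ptrace1 (((M x a - F.1 x a) ⊗ₖ (1 : Matrix (Fin d) (Fin d) ℂ)) * ρ)) :=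
        Finset.sum_congr rfl fun a _ => by rw [hdiff x a]
    _ ≤ ⨆ ρ' : {ρ' : Matrix (Fin d × Fin d) (Fin d × Fin d) ℂ // IsDensityMatrix ρ'},
        ∑ a, traceNorm (ptrace1 (((M x a - F.1 x a) ⊗ₖ (1 : Matrix (Fin d) (Fin d) ℂ)) * ρ'.1)) :=
        le_ciSup hba ⟨ρ, hρ⟩

end
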